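/- Let n be a nonnegative integer, I a nontrivial interval of ℝ, and f : I → ℝ a C^n function with no n-flat points (i.e., no point p ∈ I with D^k f(p) = 0 for all integers 0 ≤ k ≤ n). Then the zero set of f is closed and discrete in I. -/

import Mathlib

open Set MeasureTheory

/-- `K` is closed and discrete in `I`: every point of `I` has a punctured
neighborhood missing `K`. -/
def ClosedDiscreteIn (K I : Set ℝ) : Prop :=
  K ⊆ I ∧ ∀ x ∈ I, ∃ ε > 0, ∀ y ∈ K, |y - x| < ε → y = x

/-- `f` is (non-strictly) monotone on `S`. -/
def MonoOn (f : ℝ → ℝ) (S : Set ℝ) : Prop :=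
  MonotoneOn f S ∨ AntitoneOn f S

/-- `K` witnesses the piecewise monotonicity of `f` on `I`. -/
def Witnesses (f : ℝ → ℝ) (I K : Set ℝ) : Prop :=
  ClosedDiscreteIn K I ∧
    ∀ x ∈ I \ K, MonoOn f (connectedComponentIn (I \ K) x)

/-- `f` is piecewise monotone on `I`. -/
def PiecewiseMonotoneOn (f : ℝ → ℝ) (I : Set ℝ) : Prop :=
  ∃ K, Witnesses f I K

/-- The platform of `f` containing `p`: the connected component of the fiber
of `f` (within `I`) containing `p`. -/
def Platform (f : ℝ → ℝ) (I : Set ℝ) (p : ℝ) : Set ℝ :=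
  connectedComponentIn {x ∈ I | f x = f p} p

/-- `P` is a platform of `f` on `I`. -/
def IsPlatform (f : ℝ → ℝ) (I P : Set ℝ) : Prop :=
  ∃ p ∈ I, P = Platform f I p

/-- `P` is a turning platform of `f` on `I`. -/
def IsTurningPlatform (f : ℝ → ℝ) (I P : Set ℝ) : Prop :=
  IsPlatform f I P ∧
  ∃ a b c ε, a ≤ b ∧ P = Icc a b ∧ (∀ x ∈ P, f x = c) ∧ 0 < ε ∧
    Ioo (a - ε) (b + ε) ⊆ I ∧
    ((∀ x ∈ Ioo (a - ε) (b + ε) \ P, c < f x) ∨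
     (∀ x ∈ Ioo (a - ε) (b + ε) \ P, f x < c))

/-- `x` is a turning point of `f` on `I`. -/
def IsTurningPoint (f : ℝ → ℝ) (I : Set ℝ) (x : ℝ) : Prop :=
  ∃ P, IsTurningPlatform f I P ∧ x ∈ P

private lemma aux_cont_case {I : Set ℝ} {f : ℝ → ℝ} {x : ℝ}
    (hc : ContinuousOn f I) (hx : x ∈ I) (h0 : f x ≠ 0) :
    ∃ ε > 0, ∀ y ∈ I, f y = 0 → |y - x| < ε → y = x := by
  have h1 : {y | f y ≠ 0} ∈ nhdsWithin x I := by
    have := hc x hx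
    exact this.preimage_mem_nhdsWithin (isOpen_ne.mem_nhds h0)
  rw [Metric.mem_nhdsWithin_iff] at h1
  obtain ⟨ε, hε, hsub⟩ := h1
  refine ⟨ε, hε, fun y hy hfy hyx => ?_⟩
  by_contra hne
  have : y ∈ Metric.ball x ε ∩ I := ⟨by simpa [Real.dist_eq] using hyx, hy⟩
  exact hsub this hfy

private lemma aux_isolated {I : Set ℝ} (hI : I.OrdConnected) (hU : UniqueDiffOn ℝ I) :
    ∀ (k : ℕ) (f : ℝ → ℝ), ContDiffOn ℝ k f I → ∀ x ∈ I,
      iteratedDerivWithin k f I x ≠ 0 →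
      ∃ ε > 0, ∀ y ∈ I, f y = 0 → |y - x| < ε → y = x := by
  intro k
  induction k with
  | zero =>
    intro f hf x hx hne
    simp only [iteratedDerivWithin_zero] at hne
    exact aux_cont_case hf.continuousOn hx hne
  | succ k ih =>
    intro f hf x hx hne
    by_cases h0 : f x = 0
    · -- use derivative
      set g := derivWithin f I with hg
      have hgC : ContDiffOn ℝ k g I := hf.derivWithin hU (by exact_mod_cast le_refl (k+1 : ℕ∞))
      have hgx : iteratedDerivWithin k g I x ≠ 0 := by
        rwa [iteratedDerivWithin_succ'] at hne
      obtain ⟨ε, hε, hiso⟩ := ih g hgC x hx hgx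
      refine ⟨ε, hε, fun y hy hfy hyx => ?_⟩
      by_contra hne'
      have hdiff : DifferentiableOn ℝ f I :=
        hf.differentiableOn (by simp)
      -- Rolle between x and y
      have key : ∀ a b : ℝ, a ∈ I → b ∈ I → a < b → f a = 0 → f b = 0 →
          ∃ c ∈ Ioo a b, g c = 0 := by
        intro a b ha hb hab hfa hfb
        have hIcc : Icc a b ⊆ I := hI.out ha hb
        have hIoo : Ioo a b ⊆ interior I :=
          interior_maximal ((Ioo_subset_Icc_self).trans hIcc) isOpen_Ioo
        have hd : ∀ z ∈ Ioo a b, HasDerivAt f (g z) z := by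
          intro z hz
          have hmem : I ∈ nhds z := mem_interior_iff_mem_nhds.1 (hIoo hz)
          have : DifferentiableAt ℝ f z :=
            (hdiff z (interior_subset (hIoo hz))).differentiableAt hmem
          have hgz : g z = deriv f z := derivWithin_of_mem_nhds hmem
          rw [hgz]
          exact this.hasDerivAt
        have hcont : ContinuousOn f (Icc a b) := hf.continuousOn.mono hIcc
        exact exists_hasDerivAt_eq_zero hab hcont (by rw [hfa, hfb]) hd
      rcases lt_or_gt_of_ne hne' with hlt | hlt
      · obtain ⟨c, hc, hgc⟩ := key y x hy hx hlt hfy h0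
        have hcx : |c - x| < ε := by
          rw [abs_sub_lt_iff]
          constructor
          · linarith [hc.1, hc.2]
          · have : |y - x| < ε := hyx
            rw [abs_sub_lt_iff] at this
            linarith [hc.1, this.2]
        have := hiso c (hI.out hy hx ⟨le_of_lt hc.1, le_of_lt hc.2⟩) hgc hcx
        exact absurd this (ne_of_lt hc.2)
      · obtain ⟨c, hc, hgc⟩ := key x y hx hy hlt h0 hfy
        have hcx : |c - x| < ε := by
          rw [abs_sub_lt_iff]
          constructor
          · have : |y - x| < ε := hyx
            rw [abs_sub_lt_iff] at this
            linarith [hc.2, this.1]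
          · linarith [hc.1, hc.2]
        have := hiso c (hI.out hx hy ⟨le_of_lt hc.1, le_of_lt hc.2⟩) hgc hcx
        exact absurd this (ne_of_gt hc.1)
    · exact aux_cont_case hf.continuousOn hx h0

/-- If a `C^n` function on a nontrivial interval has no `n`-flat points, then
its zero set is closed and discrete in the interval. -/
theorem zeroSet_closedDiscrete_of_no_flat_points
    (n : ℕ) (I : Set ℝ) (hI : I.OrdConnected) (hnt : I.Nontrivial)
    (f : ℝ → ℝ) (hf : ContDiffOn ℝ n f I)
    (hflat : ∀ p ∈ I, ∃ k ≤ n, iteratedDerivWithin k f I p ≠ 0) :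
    ClosedDiscreteIn {x ∈ I | f x = 0} I := by
  have hconv : Convex ℝ I := hI.convex
  have hint : (interior I).Nonempty := by
    obtain ⟨a, ha, b, hb, hab⟩ := hnt
    rcases lt_or_gt_of_ne hab with h | h
    · refine ⟨(a + b) / 2, interior_maximal (fun z hz => hI.out ha hb
        ⟨le_of_lt hz.1, le_of_lt hz.2⟩) isOpen_Ioo (by constructor <;> linarith)⟩
    · refine ⟨(a + b) / 2, interior_maximal (fun z hz => hI.out hb ha
        ⟨le_of_lt hz.1, le_of_lt hz.2⟩) isOpen_Ioo (by constructor <;> linarith)⟩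
  have hU : UniqueDiffOn ℝ I := uniqueDiffOn_convex hconv hint
  constructor
  · exact fun x hx => hx.1
  · intro x hx
    obtain ⟨k, hk, hne⟩ := hflat x hx
    have hfk : ContDiffOn ℝ k f I := hf.of_le (by exact_mod_cast hk)
    obtain ⟨ε, hε, hiso⟩ := aux_isolated hI hU k f hfk x hx hne
    exact ⟨ε, hε, fun y hy hyx => hiso y hy.1 hy.2 hyx⟩
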